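/- The seven-dimensional diplo-simplex Q has exactly 16 vertices: the set of extreme points of Q equals range v ∪ range (fun i => −v i), and this set has exactly 16 elements. -/

import Mathlib

open Set Finset

/-- A point of a family which strictly maximizes an affine functional over the family is an
extreme point of the convex hull of its range. -/
lemma extreme_of_affine_strict_max {E : Type*} [AddCommGroup E] [Module ℝ E]
    {ι : Type*} (u : ι → E) (k₀ : ι) (f : E →ᵃ[ℝ] ℝ)
    (hle : ∀ i, f (u i) ≤ f (u k₀)) (heq : ∀ i, f (u i) = f (u k₀) → u i = u k₀) :
    u k₀ ∈ (convexHull ℝ (Set.range u)).extremePoints ℝ := by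
  have key : ∀ y ∈ convexHull ℝ (Set.range u),
      f y ≤ f (u k₀) ∧ (f y = f (u k₀) → y = u k₀) := by
    intro y hy
    rw [convexHull_range_eq_exists_affineCombination] at hy
    obtain ⟨s, w, hw₀, hw₁, rfl⟩ := hy
    have hmap : f (s.affineCombination ℝ u w) = ∑ i ∈ s, w i * f (u i) := by
      rw [s.map_affineCombination u w hw₁ f,
        Finset.affineCombination_eq_linear_combination _ _ _ hw₁]
      simp [smul_eq_mul]
    constructor
    · rw [hmap]
      calc ∑ i ∈ s, w i * f (u i) ≤ ∑ i ∈ s, w i * f (u k₀) := by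
            exact Finset.sum_le_sum fun i hi =>
              mul_le_mul_of_nonneg_left (hle i) (hw₀ i hi)
        _ = f (u k₀) := by rw [← Finset.sum_mul, hw₁, one_mul]
    · intro hfy
      have hzero : ∀ i ∈ s, w i * (f (u k₀) - f (u i)) = 0 := by
        have hsum0 : ∑ i ∈ s, w i * (f (u k₀) - f (u i)) = 0 := by
          have := hmap.symm.trans hfy
          have h1 : ∑ i ∈ s, w i * f (u k₀) = f (u k₀) := by
            rw [← Finset.sum_mul, hw₁, one_mul]
          simp only [mul_sub]
          rw [Finset.sum_sub_distrib, h1, this, sub_self]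
        exact (Finset.sum_eq_zero_iff_of_nonneg fun i hi =>
          mul_nonneg (hw₀ i hi) (sub_nonneg.2 (hle i))).1 hsum0
      have hui : ∀ i ∈ s, w i • u i = w i • u k₀ := by
        intro i hi
        rcases mul_eq_zero.1 (hzero i hi) with h | h
        · simp [h]
        · rw [heq i (by linarith [sub_eq_zero.1 h])]
      rw [Finset.affineCombination_eq_linear_combination _ _ _ hw₁]
      calc ∑ i ∈ s, w i • u i = ∑ i ∈ s, w i • u k₀ := Finset.sum_congr rfl hui
        _ = u k₀ := by rw [← Finset.sum_smul, hw₁, one_smul]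
  refine ⟨subset_convexHull ℝ _ (Set.mem_range_self k₀), ?_⟩
  intro y hy z hz hseg
  obtain ⟨a, b, ha, hb, hab, habc⟩ := hseg
  have hfy := key y hy
  have hfz := key z hz
  have hcombo : a * f y + b * f z = f (u k₀) := by
    have := Convex.combo_affine_apply (x := y) (y := z) (f := f) hab
    rw [habc] at this
    simpa [smul_eq_mul] using this.symm
  have h1 : b * f z ≤ b * f (u k₀) := mul_le_mul_of_nonneg_left hfz.1 hb.le
  have h2 : a * f y ≤ a * f (u k₀) := mul_le_mul_of_nonneg_left hfy.1 ha.le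
  have hM : a * f (u k₀) + b * f (u k₀) = f (u k₀) := by rw [← add_mul, hab, one_mul]
  have hfy' : f y = f (u k₀) := le_antisymm hfy.1 (le_of_mul_le_mul_left (by linarith) ha)
  have hfz' : f z = f (u k₀) := le_antisymm hfz.1 (le_of_mul_le_mul_left (by linarith) hb)
  exact hfy.2 hfy'

open Set in
/-- The seven-dimensional diplo-simplex (the Delone polytope of `E7*`) has exactly 16
vertices: its extreme points are the points `± v i`, and there are 16 of them. -/
theorem stmt_13
    (v : Fin 8 → EuclideanSpace ℝ (Fin 7))
    (hv : AffineIndependent ℝ v)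
    (hsum : ∑ i, v i = 0)
    (Q : Set (EuclideanSpace ℝ (Fin 7)))
    (hQ : Q = convexHull ℝ (range v ∪ range (fun i => -v i))) :
    Q.extremePoints ℝ = range v ∪ range (fun i => -v i) ∧
    (range v ∪ range (fun i => -v i)).ncard = 16 := by
  classical
  have htop : affineSpan ℝ (range v) = ⊤ := by
    rw [hv.affineSpan_eq_top_iff_card_eq_finrank_add_one]
    simp [finrank_euclideanSpace_fin]
  let b : AffineBasis (Fin 8) ℝ (EuclideanSpace ℝ (Fin 7)) := ⟨v, hv, htop⟩
  have hbv : ∀ i, b i = v i := fun i => rfl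
  -- barycentric coordinates of the points `v j` and `-v j`
  have hcoordv : ∀ k j, b.coord k (v j) = if j = k then 1 else 0 := by
    intro k j
    rw [← hbv j]
    by_cases h : j = k
    · simp [h, AffineBasis.coord_apply]
    · simp [h, Ne.symm h, AffineBasis.coord_apply]
  have hcoordneg : ∀ k j, b.coord k (-v j) = if j = k then -(3/4 : ℝ) else 1/4 := by
    intro k j
    set w : Fin 8 → ℝ := fun i => if i = j then -(3/4 : ℝ) else 1/4 with hwdef
    have hw : ∑ i, w i = 1 := by
      have hterm : ∀ i : Fin 8, w i = (if i = j then (-1 : ℝ) else 0) + 1/4 := by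
        intro i; simp only [hwdef]; split <;> norm_num
      rw [Finset.sum_congr rfl fun i _ => hterm i, Finset.sum_add_distrib,
        Finset.sum_ite_eq' Finset.univ j (fun _ => (-1 : ℝ))]
      simp
      norm_num
    have hcomb : Finset.univ.affineCombination ℝ (⇑b) w = -v j := by
      show Finset.univ.affineCombination ℝ v w = -v j
      rw [Finset.affineCombination_eq_linear_combination _ _ _ hw]
      have : ∀ i, w i • v i
          = (1/4 : ℝ) • v i + (if i = j then (-1 : ℝ) • v i else 0) := by
        intro i
        by_cases h : i = j <;> simp [hwdef, h] <;> module
      rw [Finset.sum_congr rfl fun i _ => this i, Finset.sum_add_distrib,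
        ← Finset.smul_sum, hsum, Finset.sum_ite_eq' Finset.univ j]
      simp
    rw [← hcomb, b.coord_apply_combination_of_mem (Finset.mem_univ k) hw]
    simp only [hwdef]
    rcases eq_or_ne j k with h | h
    · simp [h]
    · simp [h, Ne.symm h]
  -- the two ranges are disjoint
  have hdisj : Disjoint (range v) (range fun i => -v i) := by
    rw [Set.disjoint_left]
    rintro x ⟨i, rfl⟩ ⟨j, hj⟩
    have h1 : b.coord i (v i) = 1 := by rw [hcoordv]; simp
    rw [← hj, hcoordneg] at h1
    rcases eq_or_ne j i with h | h <;> simp [h] at h1 <;> norm_num at h1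
  -- the union is the range of a single map
  set u : Fin 8 ⊕ Fin 8 → EuclideanSpace ℝ (Fin 7) := Sum.elim v (fun i => -v i) with hu
  have hrange : range v ∪ range (fun i => -v i) = range u := (Set.Sum.elim_range _ _).symm
  constructor
  · rw [hQ]
    refine le_antisymm (extremePoints_convexHull_subset) ?_
    rw [hrange]
    rintro x hx
    obtain ⟨i, rfl⟩ := hx
    cases i with
    | inl k =>
      refine extreme_of_affine_strict_max u (Sum.inl k) (b.coord k) ?_ ?_
      · rintro (j | j) <;> simp only [hu, Sum.elim_inl, Sum.elim_inr, hcoordv, hcoordneg]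
        · rcases eq_or_ne j k with h | h <;> simp [h]
        · rcases eq_or_ne j k with h | h <;> simp [h] <;> norm_num
      · rintro (j | j) h <;>
          simp only [hu, Sum.elim_inl, Sum.elim_inr, hcoordv, hcoordneg] at h ⊢
        · rcases eq_or_ne j k with hjk | hjk
          · rw [hjk]
          · simp [hjk] at h
        · rcases eq_or_ne j k with hjk | hjk <;> simp [hjk] at h <;> norm_num at h
    | inr k =>
      refine extreme_of_affine_strict_max u (Sum.inr k) (-(b.coord k)) ?_ ?_
      · rintro (j | j) <;>
          simp only [hu, Sum.elim_inl, Sum.elim_inr, AffineMap.coe_neg, Pi.neg_apply,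
            hcoordv, hcoordneg, neg_le_neg_iff]
        · rcases eq_or_ne j k with h | h <;> simp [h] <;> norm_num
        · rcases eq_or_ne j k with h | h <;> simp [h] <;> norm_num
      · rintro (j | j) h <;>
          simp only [hu, Sum.elim_inl, Sum.elim_inr, AffineMap.coe_neg, Pi.neg_apply,
            hcoordv, hcoordneg, neg_inj] at h ⊢
        · rcases eq_or_ne j k with hjk | hjk <;> simp [hjk] at h <;> norm_num at h
        · rcases eq_or_ne j k with hjk | hjk
          · rw [hjk]
          · simp [hjk] at h; norm_num at h
  · rw [Set.ncard_union_eq hdisj (finite_range v) (finite_range _)]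
    have h1 : (range v).ncard = 8 := by
      rw [← Set.image_univ, Set.ncard_image_of_injective _ hv.injective,
        Set.ncard_univ]
      simp
    have h2 : (range fun i => -v i).ncard = 8 := by
      have hinj : Function.Injective (fun i => -v i) := fun i j h => by
        apply hv.injective
        simpa [neg_eq_iff_eq_neg] using h
      rw [← Set.image_univ, Set.ncard_image_of_injective _ hinj, Set.ncard_univ]
      simp
    rw [h1, h2]
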